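/- Let G = (V, E) be a finite graph and let G_STAB be the graph whose vertices are the stable sets of G, two distinct stable sets s, t being adjacent if and only if the induced subgraph G[s △ t] is connected (this is the graph of the stable set polytope STAB(G) by Chvátal's characterization). Then the edge expansion of G_STAB is at least 1: for every nonempty family X of stable sets of G with |X| at most half the total number of stable sets, the number of edges of G_STAB with exactly one endpoint in X is at least |X|. -/

import Mathlib

/-- A stable (independent) set of a graph: a set of vertices no two of which are
adjacent. -/
def IsStableSet {V : Type*} (G : SimpleGraph V) (s : Set V) : Prop :=
  ∀ v ∈ s, ∀ w ∈ s, ¬ G.Adj v w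

/-- The graph of the stable set polytope `STAB(G)` (by Chvátal's characterization):
vertices are the stable sets of `G`, two distinct stable sets being adjacent iff the
induced subgraph on their symmetric difference is connected. -/
def stableSetGraph {V : Type*} (G : SimpleGraph V) :
    SimpleGraph {s : Set V // IsStableSet G s} where
  Adj s t := s ≠ t ∧ (G.induce (symmDiff s.1 t.1)).Connected
  symm := by
    constructor
    intro s t h
    exact ⟨h.1.symm, symmDiff_comm s.1 t.1 ▸ h.2⟩
  loopless := by
    constructor
    intro s h
    exact h.1 rfl

/-- The set of edges of `G` with exactly one endpoint in `X`. -/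
def edgeBoundary {V : Type*} (G : SimpleGraph V) (X : Set V) : Set (Sym2 V) :=
  {e | e ∈ G.edgeSet ∧ ∃ v w, e = s(v, w) ∧ v ∈ X ∧ w ∉ X}

namespace StabExpansionAux

variable {V : Type*} (G : SimpleGraph V)

/-- Connectivity inside the vertex set `D`. -/
def conn (D : Set V) (x y : V) : Prop :=
  Relation.ReflTransGen (fun a b => G.Adj a b ∧ a ∈ D ∧ b ∈ D) x y

lemma conn_symm {D : Set V} {x y : V} (h : conn G D x y) : conn G D y x :=
  (@Relation.ReflTransGen.symmetric _ _
    ⟨fun _ _ h => ⟨h.1.symm, h.2.2, h.2.1⟩⟩).symm _ _ h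

/-- The connected component of `x` inside `D` (as a subset of `V`). -/
def comp (D : Set V) (x : V) : Set V := {y | conn G D x y}

lemma self_mem_comp {D : Set V} (x : V) : x ∈ comp G D x :=
  Relation.ReflTransGen.refl

lemma comp_eq_of_conn {D : Set V} {x y : V} (h : conn G D x y) :
    comp G D x = comp G D y :=
  Set.ext fun _ => ⟨fun hz => Relation.ReflTransGen.trans (conn_symm G h) hz,
    fun hz => Relation.ReflTransGen.trans h hz⟩

lemma comp_subset {D : Set V} {x : V} (hx : x ∈ D) : comp G D x ⊆ D := by
  intro y hy
  induction hy with
  | refl => exact hx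
  | tail _ h _ => exact h.2.2

lemma comp_eq_of_adj {D : Set V} {x y : V} (hx : x ∈ D) (hy : y ∈ D)
    (hadj : G.Adj x y) : comp G D x = comp G D y :=
  comp_eq_of_conn G (Relation.ReflTransGen.single ⟨hadj, hx, hy⟩)

lemma comp_connected {D : Set V} {x₀ : V} (hx : x₀ ∈ D) :
    (G.induce (comp G D x₀)).Connected := by
  have key : ∀ a b : V, conn G D a b → ∀ (ha : a ∈ comp G D x₀) (hb : b ∈ comp G D x₀),
      (G.induce (comp G D x₀)).Reachable ⟨a, ha⟩ ⟨b, hb⟩ := by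
    intro a b h
    induction h with
    | refl => intro _ _; exact SimpleGraph.Reachable.refl _
    | @tail b c hab hbc ih =>
      intro ha hc
      have hb : b ∈ comp G D x₀ := Relation.ReflTransGen.trans ha hab
      exact (ih ha hb).trans (SimpleGraph.Adj.reachable (by exact hbc.1))
  rw [SimpleGraph.connected_iff]
  constructor
  · rintro ⟨a, ha⟩ ⟨b, hb⟩
    exact key a b (Relation.ReflTransGen.trans (conn_symm G ha) hb) ha hb
  · exact ⟨⟨x₀, self_mem_comp G x₀⟩⟩

section Fin
variable [Fintype V]

/-- The index of the smallest vertex in the component of `x` in `D`. -/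
noncomputable def mIdx (D : Set V) (x : V) : ℕ :=
  sInf ((fun y => (Fintype.equivFin V y : ℕ)) '' comp G D x)

lemma mIdx_image_nonempty (D : Set V) (x : V) :
    ((fun y => (Fintype.equivFin V y : ℕ)) '' comp G D x).Nonempty :=
  ⟨_, ⟨x, self_mem_comp G x, rfl⟩⟩

lemma mIdx_mem (D : Set V) (x : V) :
    ∃ m ∈ comp G D x, (Fintype.equivFin V m : ℕ) = mIdx G D x := by
  have := Nat.sInf_mem (mIdx_image_nonempty G D x)
  obtain ⟨m, hm, hEq⟩ := this
  exact ⟨m, hm, hEq⟩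

lemma mIdx_le {D : Set V} {x y : V} (hy : y ∈ comp G D x) :
    mIdx G D x ≤ (Fintype.equivFin V y : ℕ) :=
  Nat.sInf_le ⟨y, hy, rfl⟩

lemma mIdx_lt_card (D : Set V) (x : V) : mIdx G D x < Fintype.card V :=
  lt_of_le_of_lt (mIdx_le G (self_mem_comp G x)) (Fin.is_lt _)

lemma mIdx_congr {D : Set V} {x y : V} (h : comp G D x = comp G D y) :
    mIdx G D x = mIdx G D y := by
  unfold mIdx; rw [h]

lemma comp_eq_of_mIdx_eq {D : Set V} {x y : V} (h : mIdx G D x = mIdx G D y) :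
    comp G D x = comp G D y := by
  obtain ⟨m, hm, hm'⟩ := mIdx_mem G D x
  obtain ⟨m', hm2, hm2'⟩ := mIdx_mem G D y
  have : m = m' := by
    have : (Fintype.equivFin V m : ℕ) = (Fintype.equivFin V m' : ℕ) := by
      rw [hm', hm2', h]
    exact (Fintype.equivFin V).injective (Fin.ext this)
  rw [comp_eq_of_conn G hm, this, ← comp_eq_of_conn G hm2]

lemma mIdx_eq_of_adj {D : Set V} {x y : V} (hx : x ∈ D) (hy : y ∈ D)
    (hadj : G.Adj x y) : mIdx G D x = mIdx G D y :=
  mIdx_congr G (comp_eq_of_adj G hx hy hadj)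

/-- The union of the components of `D` with minimal index `< i`. -/
noncomputable def Epart (D : Set V) (i : ℕ) : Set V :=
  {x | x ∈ D ∧ mIdx G D x < i}

/-- The component of `D` with minimal index `= i` (possibly empty). -/
noncomputable def Cpart (D : Set V) (i : ℕ) : Set V :=
  {x | x ∈ D ∧ mIdx G D x = i}

lemma Epart_subset (D : Set V) (i : ℕ) : Epart G D i ⊆ D := fun _ hx => hx.1

lemma Cpart_eq_comp {D : Set V} {i : ℕ} {x₀ : V} (hx : x₀ ∈ Cpart G D i) :
    Cpart G D i = comp G D x₀ := by
  ext y
  constructor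
  · rintro ⟨hyD, hyi⟩
    have hcomp : comp G D y = comp G D x₀ :=
      comp_eq_of_mIdx_eq G (by rw [hyi, hx.2])
    rw [← hcomp]
    exact self_mem_comp G y
  · intro hy
    have hconn : conn G D x₀ y := hy
    have hcomp : comp G D x₀ = comp G D y := comp_eq_of_conn G hconn
    refine ⟨comp_subset G hx.1 hy, ?_⟩
    rw [← mIdx_congr G hcomp, hx.2]

/-- Flipping a "closed" subset of the symmetric difference of two stable sets
yields a stable set. -/
lemma isStable_flip {s t F : Set V} (hs : IsStableSet G s) (ht : IsStableSet G t)
    (hF : F ⊆ symmDiff s t)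
    (hcl : ∀ x ∈ F, ∀ y ∈ symmDiff s t, G.Adj x y → y ∈ F) :
    IsStableSet G (symmDiff s F) := by
  have memt : ∀ a, a ∈ symmDiff s F → a ∈ F → a ∈ t := by
    intro a ha haF
    rcases Set.mem_symmDiff.1 ha with ⟨_, hnot⟩ | ⟨_, hnas⟩
    · exact absurd haF hnot
    · rcases Set.mem_symmDiff.1 (hF haF) with ⟨has, _⟩ | ⟨hat, _⟩
      · exact absurd has hnas
      · exact hat
  have mems : ∀ a, a ∈ symmDiff s F → a ∉ F → a ∈ s := by
    intro a ha haF
    rcases Set.mem_symmDiff.1 ha with ⟨has, _⟩ | ⟨haF', _⟩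
    · exact has
    · exact absurd haF' haF
  have key : ∀ a ∈ symmDiff s F, ∀ b ∈ symmDiff s F, a ∈ F → b ∉ F →
      G.Adj a b → False := by
    intro a ha b hb haF hbF hadj
    have hat : a ∈ t := memt a ha haF
    have hbs : b ∈ s := mems b hb hbF
    by_cases hbD : b ∈ symmDiff s t
    · exact hbF (hcl a haF b hbD hadj)
    · have hbt : b ∈ t := by
        by_contra hbt
        exact hbD (Set.mem_symmDiff.2 (Or.inl ⟨hbs, hbt⟩))
      exact ht a hat b hbt hadj
  intro a ha b hb hadj
  by_cases haF : a ∈ F <;> by_cases hbF : b ∈ F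
  · exact ht a (memt a ha haF) b (memt b hb hbF) hadj
  · exact key a ha b hb haF hbF hadj
  · exact key b hb a ha hbF haF hadj.symm
  · exact hs a (mems a ha haF) b (mems b hb hbF) hadj

lemma Epart_closed (s t : Set V) (i : ℕ) :
    ∀ x ∈ Epart G (symmDiff s t) i, ∀ y ∈ symmDiff s t, G.Adj x y →
      y ∈ Epart G (symmDiff s t) i := by
  intro x hx y hy hadj
  exact ⟨hy, by rw [← mIdx_eq_of_adj G hx.1 hy hadj]; exact hx.2⟩

lemma DmE_subset (D : Set V) (i : ℕ) : symmDiff D (Epart G D i) ⊆ D := by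
  intro x hx
  rcases Set.mem_symmDiff.1 hx with ⟨hxD, _⟩ | ⟨hxE, _⟩
  · exact hxD
  · exact hxE.1

lemma mem_DmE {D : Set V} {i : ℕ} {x : V} :
    x ∈ symmDiff D (Epart G D i) ↔ x ∈ D ∧ ¬ mIdx G D x < i := by
  constructor
  · intro hx
    rcases Set.mem_symmDiff.1 hx with ⟨hxD, hxE⟩ | ⟨hxE, hxD⟩
    · exact ⟨hxD, fun h => hxE ⟨hxD, h⟩⟩
    · exact absurd hxE.1 hxD
  · intro ⟨hxD, hxm⟩
    exact Set.mem_symmDiff.2 (Or.inl ⟨hxD, fun h => hxm h.2⟩)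

lemma DmE_closed (s t : Set V) (i : ℕ) :
    ∀ x ∈ symmDiff (symmDiff s t) (Epart G (symmDiff s t) i),
      ∀ y ∈ symmDiff s t, G.Adj x y →
      y ∈ symmDiff (symmDiff s t) (Epart G (symmDiff s t) i) := by
  intro x hx y hy hadj
  have hx' := (mem_DmE G).1 hx
  exact (mem_DmE G).2 ⟨hy, by rw [← mIdx_eq_of_adj G hx'.1 hy hadj]; exact hx'.2⟩

/-- The `i`-th vertex on the canonical path from `s` to `t`. -/
noncomputable def uPath (s t : {s : Set V // IsStableSet G s}) (i : ℕ) :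
    {s : Set V // IsStableSet G s} :=
  ⟨symmDiff s.1 (Epart G (symmDiff s.1 t.1) i),
    isStable_flip G s.2 t.2 (Epart_subset G _ i) (Epart_closed G s.1 t.1 i)⟩

/-- The witness stable set associated to step `i`. -/
noncomputable def wWit (s t : {s : Set V // IsStableSet G s}) (i : ℕ) :
    {s : Set V // IsStableSet G s} :=
  ⟨symmDiff s.1 (symmDiff (symmDiff s.1 t.1) (Epart G (symmDiff s.1 t.1) i)),
    isStable_flip G s.2 t.2 (DmE_subset G _ i) (DmE_closed G s.1 t.1 i)⟩

lemma uPath_zero (s t : {s : Set V // IsStableSet G s}) : uPath G s t 0 = s := by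
  apply Subtype.ext
  show symmDiff s.1 (Epart G (symmDiff s.1 t.1) 0) = s.1
  have : Epart G (symmDiff s.1 t.1) 0 = (⊥ : Set V) := by
    ext x; simp [Epart]
  rw [this, symmDiff_bot]

lemma uPath_card (s t : {s : Set V // IsStableSet G s}) :
    uPath G s t (Fintype.card V) = t := by
  apply Subtype.ext
  show symmDiff s.1 (Epart G (symmDiff s.1 t.1) (Fintype.card V)) = t.1
  have : Epart G (symmDiff s.1 t.1) (Fintype.card V) = symmDiff s.1 t.1 := by
    ext x; exact ⟨fun h => h.1, fun h => ⟨h, mIdx_lt_card G _ x⟩⟩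
  rw [this, symmDiff_symmDiff_cancel_left]

lemma wWit_eq (s t : {s : Set V // IsStableSet G s}) (i : ℕ) :
    (wWit G s t i).1 = symmDiff (uPath G s t i).1 (symmDiff s.1 t.1) := by
  show symmDiff s.1 (symmDiff (symmDiff s.1 t.1) (Epart G (symmDiff s.1 t.1) i))
      = symmDiff (symmDiff s.1 (Epart G (symmDiff s.1 t.1) i)) (symmDiff s.1 t.1)
  rw [symmDiff_comm (symmDiff s.1 t.1) (Epart G (symmDiff s.1 t.1) i),
    ← symmDiff_assoc]

lemma D_recover (s t : {s : Set V // IsStableSet G s}) (i : ℕ) :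
    symmDiff s.1 t.1 = symmDiff (uPath G s t i).1 (wWit G s t i).1 := by
  rw [wWit_eq, symmDiff_symmDiff_cancel_left]

lemma s_recover (s t : {s : Set V // IsStableSet G s}) (i : ℕ) :
    s.1 = symmDiff (uPath G s t i).1 (Epart G (symmDiff s.1 t.1) i) := by
  show s.1 = symmDiff (symmDiff s.1 (Epart G (symmDiff s.1 t.1) i)) _
  rw [symmDiff_symmDiff_cancel_right]

lemma uPath_symmDiff (s t : {s : Set V // IsStableSet G s}) (i : ℕ) :
    symmDiff (uPath G s t i).1 (uPath G s t (i + 1)).1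
      = Cpart G (symmDiff s.1 t.1) i := by
  show symmDiff (symmDiff s.1 (Epart G (symmDiff s.1 t.1) i))
      (symmDiff s.1 (Epart G (symmDiff s.1 t.1) (i + 1)))
      = Cpart G (symmDiff s.1 t.1) i
  ext x
  by_cases hs : x ∈ s.1 <;> by_cases hD : x ∈ symmDiff s.1 t.1 <;>
    by_cases hm : mIdx G (symmDiff s.1 t.1) x < i <;>
    by_cases hm2 : mIdx G (symmDiff s.1 t.1) x < i + 1 <;>
    simp [Set.mem_symmDiff, Epart, Cpart, hs, hD, hm, hm2] <;>
    by_cases ht : x ∈ t.1 <;> simp_all [Set.mem_symmDiff] <;> omega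

end Fin

/-- Exchange lemma in the Boolean group of sets. -/
lemma symmDiff_swap {α : Type*} (a b D D' : Set α)
    (h : symmDiff b D = symmDiff a D') :
    symmDiff D D' = symmDiff a b := by
  calc symmDiff D D' = symmDiff (symmDiff b (symmDiff b D)) D' := by
        rw [symmDiff_symmDiff_cancel_left]
    _ = symmDiff b (symmDiff (symmDiff b D) D') := symmDiff_assoc _ _ _
    _ = symmDiff b (symmDiff (symmDiff a D') D') := by rw [h]
    _ = symmDiff b a := by rw [symmDiff_symmDiff_cancel_right]
    _ = symmDiff a b := symmDiff_comm _ _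

/-- `ncard` of a set product. -/
lemma ncard_prod {α β : Type*} (A : Set α) (B : Set β) :
    (A ×ˢ B).ncard = A.ncard * B.ncard := by
  rw [← Nat.card_coe_set_eq, ← Nat.card_coe_set_eq, ← Nat.card_coe_set_eq,
    Nat.card_congr (Equiv.Set.prod A B), Nat.card_prod]

end StabExpansionAux

set_option maxHeartbeats 1000000 in
open StabExpansionAux in
/-- The graph of the stable set polytope of a finite graph has edge expansion at
least 1: every nonempty family `X` of stable sets containing at most half of all stable
sets has at least `|X|` boundary edges in `G_STAB`. -/
theorem stableSetGraph_edge_expansion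
    {V : Type*} [Fintype V] (G : SimpleGraph V)
    (X : Set {s : Set V // IsStableSet G s}) (hX : X.Nonempty)
    (hX2 : 2 * X.ncard ≤ Nat.card {s : Set V // IsStableSet G s}) :
    X.ncard ≤ (edgeBoundary (stableSetGraph G) X).ncard := by
  classical
  set B : Set (Sym2 {s : Set V // IsStableSet G s}) := edgeBoundary (stableSetGraph G) X with hB
  set P : Set ({s : Set V // IsStableSet G s} × {s : Set V // IsStableSet G s}) := X ×ˢ Xᶜ with hP
  -- existence of a crossing step on each canonical path
  have hex : ∀ p : {s : Set V // IsStableSet G s} × {s : Set V // IsStableSet G s}, p ∈ P → ∃ i : ℕ,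
      uPath G p.1 p.2 i ∈ X ∧ uPath G p.1 p.2 (i + 1) ∉ X := by
    rintro ⟨s, t⟩ ⟨hsX, htX⟩
    by_contra hcon
    push_neg at hcon
    have hall : ∀ j : ℕ, uPath G s t j ∈ X := by
      intro j
      induction j with
      | zero => rw [uPath_zero]; exact hsX
      | succ j ih => exact hcon j ih
    have := hall (Fintype.card V)
    rw [uPath_card] at this
    exact htX this
  choose! f hf1 hf2 using hex
  set Ψ : ({s : Set V // IsStableSet G s} × {s : Set V // IsStableSet G s}) × Bool → Sym2 {s : Set V // IsStableSet G s} × {s : Set V // IsStableSet G s} := fun q =>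
    (s(uPath G q.1.1 q.1.2 (f q.1), uPath G q.1.1 q.1.2 (f q.1 + 1)),
      wWit G q.1.1 q.1.2 (if q.2 then f q.1 else f q.1 + 1)) with hΨ
  -- basic facts about pairs in P
  have hune : ∀ p ∈ P, uPath G p.1 p.2 (f p) ≠ uPath G p.1 p.2 (f p + 1) := by
    intro p hp h
    have h1 := hf1 p hp
    rw [h] at h1
    exact hf2 p hp h1
  have hCne : ∀ p ∈ P, (Cpart G (symmDiff p.1.1 p.2.1) (f p)).Nonempty := by
    intro p hp
    rw [← uPath_symmDiff, Set.nonempty_iff_ne_empty]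
    intro h
    apply hune p hp
    apply Subtype.ext
    exact symmDiff_eq_bot.1 h
  -- the chosen edge is a boundary edge
  have hedge : ∀ p ∈ P,
      s(uPath G p.1 p.2 (f p), uPath G p.1 p.2 (f p + 1)) ∈ B := by
    intro p hp
    obtain ⟨x₀, hx₀⟩ := hCne p hp
    refine ⟨?_, uPath G p.1 p.2 (f p), uPath G p.1 p.2 (f p + 1), rfl,
      hf1 p hp, hf2 p hp⟩
    rw [SimpleGraph.mem_edgeSet]
    refine ⟨hune p hp, ?_⟩
    have hsd : symmDiff (uPath G p.1 p.2 (f p)).1 (uPath G p.1 p.2 (f p + 1)).1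
        = comp G (symmDiff p.1.1 p.2.1) x₀ := by
      rw [uPath_symmDiff]; exact Cpart_eq_comp G hx₀
    rw [hsd]
    exact comp_connected G hx₀.1
  -- injectivity of Ψ on P × univ
  have hinj : Set.InjOn Ψ (P ×ˢ (Set.univ : Set Bool)) := by
    rintro ⟨p, b⟩ hq ⟨p', b'⟩ hq' heq
    have hp : p ∈ P := hq.1
    have hp' : p' ∈ P := hq'.1
    rw [hΨ] at heq
    dsimp only at heq
    rw [Prod.mk.injEq] at heq
    obtain ⟨he, hwe⟩ := heq
    -- orient the edge
    have huv : uPath G p.1 p.2 (f p) = uPath G p'.1 p'.2 (f p')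
        ∧ uPath G p.1 p.2 (f p + 1) = uPath G p'.1 p'.2 (f p' + 1) := by
      rcases Sym2.eq_iff.1 he with h | h
      · exact h
      · exfalso
        have h1 := hf1 p hp
        rw [h.1] at h1
        exact hf2 p' hp' h1
    have huu : (uPath G p.1 p.2 (f p)).1 = (uPath G p'.1 p'.2 (f p')).1 :=
      congrArg Subtype.val huv.1
    have hvv : (uPath G p.1 p.2 (f p + 1)).1 = (uPath G p'.1 p'.2 (f p' + 1)).1 :=
      congrArg Subtype.val huv.2
    -- the common component
    have hCC : Cpart G (symmDiff p.1.1 p.2.1) (f p)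
        = Cpart G (symmDiff p'.1.1 p'.2.1) (f p') := by
      rw [← uPath_symmDiff, ← uPath_symmDiff, huu, hvv]
    obtain ⟨x₀, hx₀⟩ := hCne p hp
    have hx₀' : x₀ ∈ Cpart G (symmDiff p'.1.1 p'.2.1) (f p') := by
      rw [← hCC]; exact hx₀
    cases b <;> cases b'
    -- case (false, false)
    · have hval : (wWit G p.1 p.2 (f p + 1)).1 = (wWit G p'.1 p'.2 (f p' + 1)).1 :=
        congrArg Subtype.val hwe
      have hD : symmDiff p.1.1 p.2.1 = symmDiff p'.1.1 p'.2.1 := by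
        rw [D_recover G p.1 p.2 (f p + 1), D_recover G p'.1 p'.2 (f p' + 1), hvv, hval]
      have hff : f p = f p' := by
        have h1 := hx₀.2
        have h2 := hx₀'.2
        rw [hD] at h1
        omega
      have hs1 : p.1 = p'.1 := by
        apply Subtype.ext
        rw [s_recover G p.1 p.2 (f p + 1), s_recover G p'.1 p'.2 (f p' + 1), hvv,
          hD, hff]
      have ht1 : p.2 = p'.2 := by
        apply Subtype.ext
        calc p.2.1 = symmDiff p.1.1 (symmDiff p.1.1 p.2.1) :=
              (symmDiff_symmDiff_cancel_left _ _).symm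
          _ = p'.2.1 := by
              rw [hD, congrArg Subtype.val hs1, symmDiff_symmDiff_cancel_left]
      have hpp : p = p' := Prod.ext_iff.2 ⟨hs1, ht1⟩
      rw [hpp]
    -- case (false, true)
    · exfalso
      have h : (wWit G p.1 p.2 (f p + 1)).1 = (wWit G p'.1 p'.2 (f p')).1 :=
        congrArg Subtype.val hwe
      rw [wWit_eq, wWit_eq, ← huu] at h
      have hDD := symmDiff_swap (uPath G p.1 p.2 (f p)).1
        (uPath G p.1 p.2 (f p + 1)).1 (symmDiff p.1.1 p.2.1)
        (symmDiff p'.1.1 p'.2.1) h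
      rw [uPath_symmDiff] at hDD
      have hx₀DD : x₀ ∈ symmDiff (symmDiff p.1.1 p.2.1) (symmDiff p'.1.1 p'.2.1) := by
        rw [hDD]; exact hx₀
      rcases Set.mem_symmDiff.1 hx₀DD with ⟨_, h2⟩ | ⟨_, h2⟩
      · exact h2 hx₀'.1
      · exact h2 hx₀.1
    -- case (true, false)
    · exfalso
      have h : (wWit G p.1 p.2 (f p)).1 = (wWit G p'.1 p'.2 (f p' + 1)).1 :=
        congrArg Subtype.val hwe
      rw [wWit_eq, wWit_eq, ← hvv] at h
      have hDD := symmDiff_swap (uPath G p.1 p.2 (f p + 1)).1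
        (uPath G p.1 p.2 (f p)).1 (symmDiff p.1.1 p.2.1)
        (symmDiff p'.1.1 p'.2.1) h
      rw [symmDiff_comm (uPath G p.1 p.2 (f p + 1)).1 (uPath G p.1 p.2 (f p)).1,
        uPath_symmDiff] at hDD
      have hx₀DD : x₀ ∈ symmDiff (symmDiff p.1.1 p.2.1) (symmDiff p'.1.1 p'.2.1) := by
        rw [hDD]; exact hx₀
      rcases Set.mem_symmDiff.1 hx₀DD with ⟨_, h2⟩ | ⟨_, h2⟩
      · exact h2 hx₀'.1
      · exact h2 hx₀.1
    -- case (true, true)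
    · have hval : (wWit G p.1 p.2 (f p)).1 = (wWit G p'.1 p'.2 (f p')).1 :=
        congrArg Subtype.val hwe
      have hD : symmDiff p.1.1 p.2.1 = symmDiff p'.1.1 p'.2.1 := by
        rw [D_recover G p.1 p.2 (f p), D_recover G p'.1 p'.2 (f p'), huu, hval]
      have hff : f p = f p' := by
        have h1 := hx₀.2
        have h2 := hx₀'.2
        rw [hD] at h1
        omega
      have hs1 : p.1 = p'.1 := by
        apply Subtype.ext
        rw [s_recover G p.1 p.2 (f p), s_recover G p'.1 p'.2 (f p'), huu, hD, hff]
      have ht1 : p.2 = p'.2 := by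
        apply Subtype.ext
        calc p.2.1 = symmDiff p.1.1 (symmDiff p.1.1 p.2.1) :=
              (symmDiff_symmDiff_cancel_left _ _).symm
          _ = p'.2.1 := by
              rw [hD, congrArg Subtype.val hs1, symmDiff_symmDiff_cancel_left]
      have hpp : p = p' := Prod.ext_iff.2 ⟨hs1, ht1⟩
      rw [hpp]
  -- the image of Ψ lies in B ×ˢ univ
  have himg : Ψ '' (P ×ˢ (Set.univ : Set Bool)) ⊆ B ×ˢ (Set.univ : Set {s : Set V // IsStableSet G s}) := by
    rintro _ ⟨⟨p, b⟩, hq, rfl⟩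
    exact Set.mem_prod.2 ⟨hedge p hq.1, Set.mem_univ _⟩
  -- counting
  have hfin : (B ×ˢ (Set.univ : Set {s : Set V // IsStableSet G s})).Finite := Set.toFinite _
  have hcard : (P ×ˢ (Set.univ : Set Bool)).ncard
      ≤ (B ×ˢ (Set.univ : Set {s : Set V // IsStableSet G s})).ncard := by
    rw [← Set.ncard_image_of_injOn hinj]
    exact Set.ncard_le_ncard himg hfin
  rw [ncard_prod, ncard_prod, ncard_prod, Set.ncard_univ, Set.ncard_univ] at hcard
  have hboolcard : Nat.card Bool = 2 := by simp [Nat.card_eq_fintype_card]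
  rw [hboolcard] at hcard
  -- arithmetic
  have hcompl : X.ncard + Xᶜ.ncard = Nat.card {s : Set V // IsStableSet G s} :=
    Set.ncard_add_ncard_compl X
  have hXpos : 0 < X.ncard := (Set.ncard_pos (Set.toFinite X)).2 hX
  set a := X.ncard with ha
  set c := Xᶜ.ncard with hc
  set N := Nat.card {s : Set V // IsStableSet G s} with hN
  set Bn := B.ncard with hBn
  -- hcard : a * c * 2 ≤ Bn * N,  hcompl : a + c = N,  hX2 : 2 * a ≤ N
  have hNpos : 0 < N := by omega
  have hac : a ≤ c := by omega
  have key : a * N ≤ Bn * N := by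
    calc a * N = a * a + a * c := by rw [← hcompl]; ring
      _ ≤ a * c + a * c := by
          have := Nat.mul_le_mul (le_refl a) hac
          omega
      _ = a * c * 2 := by ring
      _ ≤ Bn * N := hcard
  exact Nat.le_of_mul_le_mul_right key hNpos
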